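/- arXiv:2009.09507 — 16 statements merged into one kernel-verified Lean document; each statement's English description precedes it below -/
import Mathlib

section
/- Let R be a commutative ring, S a multiplicatively closed subset of R, M an R-module, and P a submodule of M with (P : M) ∩ S = ∅. Then P is an S-primary submodule of M if and only if there exists s ∈ S such that for every submodule N of M and every r ∈ R with r • N ⊆ P, either s * r ∈ √(P : M) or s • N ⊆ P. -/
/-- `P` is an `S`-primary submodule of `M`. -/
def IsSPrimary {R M : Type*} [CommRing R] [AddCommGroup M] [Module R M]
    (S : Set R) (P : Submodule R M) : Prop :=
  (∀ s ∈ S, s ∉ P.colon ⊤) ∧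
  ∃ s ∈ S, ∀ (r : R) (m : M), r • m ∈ P → s * r ∈ (P.colon ⊤).radical ∨ s • m ∈ P

theorem stmt0 {R M : Type*} [CommRing R] [AddCommGroup M] [Module R M]
    (S : Set R) (hS0 : (0 : R) ∉ S) (hS1 : (1 : R) ∈ S)
    (hSmul : ∀ a ∈ S, ∀ b ∈ S, a * b ∈ S)
    (P : Submodule R M) (hdisj : ∀ s ∈ S, s ∉ P.colon ⊤) :
    IsSPrimary S P ↔
      ∃ s ∈ S, ∀ (N : Submodule R M) (r : R),
        (∀ n ∈ N, r • n ∈ P) → s * r ∈ (P.colon ⊤).radical ∨ ∀ n ∈ N, s • n ∈ P := by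
  constructor
  · rintro ⟨-, s, hs, h⟩
    refine ⟨s, hs, fun N r hN => ?_⟩
    by_cases hr : s * r ∈ (P.colon ⊤).radical
    · exact Or.inl hr
    · refine Or.inr fun n hn => ?_
      rcases h r n (hN n hn) with h' | h'
      · exact absurd h' hr
      · exact h'
  · rintro ⟨s, hs, h⟩
    refine ⟨hdisj, s, hs, fun r m hrm => ?_⟩
    have hside : ∀ n ∈ Submodule.span R {m}, r • n ∈ P := by
      intro n hn
      rcases Submodule.mem_span_singleton.mp hn with ⟨c, rfl⟩
      rw [smul_comm]
      exact P.smul_mem c hrm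
    rcases h (Submodule.span R {m}) r hside with h' | h'
    · exact Or.inl h'
    · exact Or.inr (h' m (Submodule.mem_span_singleton_self m))
end

section
/- Let R be a commutative ring, S a multiplicatively closed subset of R, M an R-module, and P a submodule of M with (P : M) ∩ S = ∅. Then P is an S-primary submodule of M if and only if there exists s ∈ S such that for every ideal J of R and every submodule N of M with J • N ⊆ P, either s • J ⊆ √(P : M) or s • N ⊆ P. -/
theorem stmt1 {R M : Type*} [CommRing R] [AddCommGroup M] [Module R M]
    (S : Set R) (hS0 : (0 : R) ∉ S) (hS1 : (1 : R) ∈ S)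
    (hSmul : ∀ a ∈ S, ∀ b ∈ S, a * b ∈ S)
    (P : Submodule R M) (hdisj : ∀ s ∈ S, s ∉ P.colon ⊤) :
    IsSPrimary S P ↔
      ∃ s ∈ S, ∀ (J : Ideal R) (N : Submodule R M),
        J • N ≤ P → (∀ a ∈ J, s * a ∈ (P.colon ⊤).radical) ∨ ∀ n ∈ N, s • n ∈ P := by
  constructor
  · rintro ⟨-, s, hs, hspec⟩
    refine ⟨s, hs, fun J N hJN => ?_⟩
    by_cases h : ∀ a ∈ J, s * a ∈ (P.colon ⊤).radical
    · exact Or.inl h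
    · push_neg at h
      obtain ⟨a, haJ, ha⟩ := h
      refine Or.inr fun n hn => ?_
      rcases hspec a n (hJN (Submodule.smul_mem_smul haJ hn)) with h1 | h2
      · exact absurd h1 ha
      · exact h2
  · rintro ⟨s, hs, hspec⟩
    refine ⟨hdisj, s, hs, fun r m hrm => ?_⟩
    have hJN : Ideal.span {r} • Submodule.span R {m} ≤ P := by
      rw [Submodule.smul_le]
      intro a ha n hn
      obtain ⟨c, rfl⟩ := Ideal.mem_span_singleton'.mp ha
      obtain ⟨c', rfl⟩ := Submodule.mem_span_singleton.mp hn
      have : (c * r) • (c' • m) = (c * c') • (r • m) := by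
        rw [smul_smul, smul_smul]; congr 1; ring
      rw [this]
      exact P.smul_mem _ hrm
    rcases hspec _ _ hJN with h | h
    · exact Or.inl (h r (Ideal.mem_span_singleton_self r))
    · exact Or.inr (h m (Submodule.mem_span_singleton_self m))
end

section
/- Consider the ℤ-module M = ℤ/4ℤ, the multiplicative set S = ℤ \ 2ℤ, and the submodule P = 0. Then P is an S-primary submodule of M but P is not an S-prime submodule of M. -/
lemma smul_eq_cast_mul (r : ℤ) (m : ZMod 4) : r • m = (r : ZMod 4) * m := by
  simp [zsmul_eq_mul]

lemma colon_iff (x : ℤ) : x ∈ (⊥ : Submodule ℤ (ZMod 4)).colon ⊤ ↔ (4:ℤ) ∣ x := by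
  rw [Submodule.mem_colon]
  constructor
  · intro h
    have := h 1 trivial
    rw [Submodule.mem_bot, smul_eq_cast_mul, mul_one] at this
    exact (ZMod.intCast_zmod_eq_zero_iff_dvd x 4).mp this
  · intro h p _
    rw [Submodule.mem_bot, smul_eq_cast_mul]
    have : (x : ZMod 4) = 0 := (ZMod.intCast_zmod_eq_zero_iff_dvd x 4).mpr h
    rw [this, zero_mul]

lemma odd_unit : ∀ a m : ZMod 4, (2*a+1)*m = 0 → m = 0 := by decide

theorem stmt4 :
    IsSPrimary {n : ℤ | ¬ (2 ∣ n)} (⊥ : Submodule ℤ (ZMod 4)) ∧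
    ¬ ((∀ s ∈ {n : ℤ | ¬ (2 ∣ n)}, s ∉ (⊥ : Submodule ℤ (ZMod 4)).colon ⊤) ∧
        ∃ s ∈ {n : ℤ | ¬ (2 ∣ n)}, ∀ (r : ℤ) (m : ZMod 4),
          r • m ∈ (⊥ : Submodule ℤ (ZMod 4)) →
            s * r ∈ (⊥ : Submodule ℤ (ZMod 4)).colon ⊤ ∨ s • m ∈ (⊥ : Submodule ℤ (ZMod 4))) := by
  constructor
  · constructor
    · intro s hs hmem
      rw [colon_iff] at hmem
      exact hs (dvd_trans ⟨2, rfl⟩ hmem)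
    · refine ⟨1, by norm_num, ?_⟩
      intro r m hrm
      by_cases h2 : (2:ℤ) ∣ r
      · left
        obtain ⟨k, hk⟩ := h2
        refine ⟨2, ?_⟩
        rw [colon_iff]
        rw [one_mul, hk]
        ring_nf
        exact ⟨k^2, by ring⟩
      · right
        rw [Submodule.mem_bot, one_smul]
        rw [Submodule.mem_bot, smul_eq_cast_mul] at hrm
        have hr1 : r % 2 = 1 := Int.emod_two_eq r |>.resolve_left (fun h => h2 (Int.dvd_of_emod_eq_zero h))
        have : r = 2 * (r / 2) + 1 := by omega
        rw [this] at hrm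
        push_cast at hrm
        exact odd_unit _ _ hrm
  · rintro ⟨h1, s, hs, h⟩
    have h20 : (2:ℤ) • (2 : ZMod 4) ∈ (⊥ : Submodule ℤ (ZMod 4)) := by
      rw [Submodule.mem_bot, smul_eq_cast_mul]; decide
    rcases h 2 2 h20 with h' | h'
    · rw [colon_iff] at h'
      exact hs (by omega)
    · rw [Submodule.mem_bot, smul_eq_cast_mul] at h'
      have hr1 : s % 2 = 1 := Int.emod_two_eq s |>.resolve_left (fun h => hs (Int.dvd_of_emod_eq_zero h))
      have hse : s = 2 * (s / 2) + 1 := by omega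
      rw [hse] at h'
      push_cast at h'
      revert h'
      generalize ((s/2 : ℤ) : ZMod 4) = a
      revert a
      decide
end

section
/- Let S be a multiplicatively closed subset of R with saturation S* = {x ∈ R | x/1 is a unit of S⁻¹R}, and let P be a submodule of an R-module M. Then P is an S-primary submodule of M if and only if P is an S*-primary submodule of M. -/
lemma exists_mul_mem_of_isUnit {R : Type*} [CommRing R] (S : Submonoid R) {x : R}
    (h : IsUnit (algebraMap R (Localization S) x)) : ∃ c : R, x * c ∈ S := by
  obtain ⟨y, hy⟩ := isUnit_iff_exists_inv.1 h
  obtain ⟨⟨a, t⟩, (hat : IsLocalization.mk' (Localization S) a t = y)⟩ := IsLocalization.mk'_surjective S y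
  rw [← hat, ← IsLocalization.mk'_one (M := S) (Localization S) x,
    ← IsLocalization.mk'_mul, one_mul, IsLocalization.mk'_eq_iff_eq_mul, one_mul] at hy
  obtain ⟨c, hc⟩ := (IsLocalization.eq_iff_exists S (Localization S)).1 hy
  refine ⟨a * c, ?_⟩
  have : (x * (a * c)) = (t : R) * c := by ring_nf; ring_nf at hc; linear_combination hc
  rw [this]
  exact mul_mem t.2 c.2

theorem stmt6 {R M : Type*} [CommRing R] [AddCommGroup M] [Module R M]
    (S : Submonoid R) (hS0 : (0 : R) ∉ S) (P : Submodule R M) :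
    IsSPrimary (S : Set R) P ↔
      IsSPrimary {x : R | IsUnit (algebraMap R (Localization S) x)} P := by
  have hsub : (S : Set R) ⊆ {x : R | IsUnit (algebraMap R (Localization S) x)} :=
    fun s hs => IsLocalization.map_units (Localization S) ⟨s, hs⟩
  constructor
  · rintro ⟨h1, s, hs, h2⟩
    refine ⟨fun x hx hmem => ?_, s, hsub hs, h2⟩
    obtain ⟨c, hc⟩ := exists_mul_mem_of_isUnit S hx
    exact h1 _ hc (by simpa [mul_comm] using Ideal.mul_mem_left _ c hmem)
  · rintro ⟨h1, s, hs, h2⟩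
    obtain ⟨c, hc⟩ := exists_mul_mem_of_isUnit S hs
    refine ⟨fun x hx => h1 x (hsub hx), s * c, hc, fun r m hrm => ?_⟩
    rcases h2 r m hrm with h | h
    · left
      have : s * c * r = c * (s * r) := by ring
      rw [this]
      exact Ideal.mul_mem_left _ c h
    · right
      have : (s * c) • m = c • (s • m) := by rw [← mul_smul]; ring_nf
      rw [this]
      exact Submodule.smul_mem _ c h
end

section
/- Let P be an S-primary submodule of an R-module M. Then the localization S⁻¹P is a primary submodule of the S⁻¹R-module S⁻¹M. -/
/-- `Q` is a primary submodule of the `A`-module `N`. -/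
def IsPrimarySub {A N : Type*} [CommRing A] [AddCommGroup N] [Module A N]
    (Q : Submodule A N) : Prop :=
  Q ≠ ⊤ ∧ ∀ (r : A) (n : N), r • n ∈ Q → n ∈ Q ∨ r ∈ (Q.colon ⊤).radical

theorem stmt7 {R M : Type*} [CommRing R] [AddCommGroup M] [Module R M]
    (S : Submonoid R) (hS0 : (0 : R) ∉ S) (P : Submodule R M)
    (hP : IsSPrimary (S : Set R) P) :
    IsPrimarySub (Submodule.localized S P) := by
  classical
  obtain ⟨hdisj, s₀, hs₀, hprim⟩ := hP
  set A := Localization S with hA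
  set f := LocalizedModule.mkLinearMap S M with hf
  -- no element of S lies in the radical of the colon ideal
  have hSrad : ∀ c ∈ S, c ∉ (P.colon ⊤).radical := by
    intro c hc hcr
    obtain ⟨n, hn⟩ := hcr
    exact hdisj (c ^ n) (pow_mem hc n) hn
  -- the image of the radical lands in the radical of the localized colon
  have hmap : ∀ a : R, a ∈ (P.colon ⊤).radical →
      algebraMap R A a ∈ ((Submodule.localized S P).colon ⊤).radical := by
    rintro a ⟨n, hn⟩
    refine ⟨n, ?_⟩
    rw [← map_pow, Submodule.mem_colon]
    intro x _
    obtain ⟨⟨m, t⟩, rfl⟩ := IsLocalizedModule.mk'_surjective S f x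
    rw [Function.uncurry_apply_pair, algebraMap_smul, ← IsLocalizedModule.mk'_smul]
    exact ⟨a ^ n • m, Submodule.mem_colon.mp hn m trivial, t, rfl⟩
  constructor
  · -- the localized submodule is proper
    intro htop
    have hs₀colon : s₀ ∈ P.colon ⊤ := by
      rw [Submodule.mem_colon]
      intro m _
      have hm : IsLocalizedModule.mk' f m (1 : S) ∈ Submodule.localized S P := by
        rw [htop]; trivial
      obtain ⟨p, hp, t, hpt⟩ := hm
      rw [IsLocalizedModule.mk'_eq_mk'_iff] at hpt
      obtain ⟨u, hu⟩ := hpt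
      -- hu : u • t • m = u • 1 • p
      have hmem : ((u : R) * (t : R)) • m ∈ P := by
        have : (u : R) • (t : R) • m = (u : R) • p := by
          simpa [Submonoid.smul_def, one_smul] using hu
        rw [mul_smul, this]
        exact P.smul_mem _ hp
      rcases hprim _ m hmem with h | h
      · exact absurd h (hSrad _ (mul_mem hs₀ (mul_mem u.2 t.2)))
      · exact h
    exact hdisj s₀ hs₀ hs₀colon
  · -- primary property
    intro r n hrn
    obtain ⟨⟨r₀, u⟩, hru⟩ := IsLocalization.mk'_surjective S r
    obtain rfl : r = IsLocalization.mk' A r₀ u := hru.symm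
    obtain ⟨⟨m, t⟩, rfl⟩ := IsLocalizedModule.mk'_surjective S f n
    rw [Function.uncurry_apply_pair, IsLocalizedModule.mk'_smul_mk'] at hrn
    obtain ⟨p, hp, v, hpv⟩ := hrn
    rw [IsLocalizedModule.mk'_eq_mk'_iff] at hpv
    obtain ⟨w, hw⟩ := hpv
    -- hw : w • v • (r₀ • m) = w • (u * t) • p
    have hmem : ((w : R) * (v : R) * r₀) • m ∈ P := by
      have h2 : ((w : R) * (v : R) * r₀) • m = (w : R) • (u : R) • (t : R) • p := by
        simp only [mul_smul]
        simpa [Submonoid.smul_def, Submonoid.coe_mul, mul_smul] using hw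
      rw [h2]
      exact P.smul_mem _ (P.smul_mem _ (P.smul_mem _ hp))
    rcases hprim _ m hmem with h | h
    · -- r lands in the radical
      right
      set c : S := ⟨s₀, hs₀⟩ * w * v with hc
      have key : IsLocalization.mk' A r₀ u =
          IsLocalization.mk' A (1 : R) (c * u) * algebraMap R A (r₀ * (c : R)) := by
        rw [← IsLocalization.mk'_one (M := S) A, ← IsLocalization.mk'_mul,
          one_mul, mul_one, mul_comm c u, IsLocalization.mk'_cancel]
      rw [key]
      apply Ideal.mul_mem_left
      apply hmap
      have hcr : r₀ * (c : R) = s₀ * ((w : R) * (v : R) * r₀) := by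
        simp only [hc, Submonoid.coe_mul]; ring
      rw [hcr]
      exact h
    · -- n lies in the localized submodule
      left
      refine ⟨s₀ • m, h, ⟨s₀, hs₀⟩ * t, ?_⟩
      rw [show (s₀ : R) • m = (⟨s₀, hs₀⟩ : S) • m from rfl,
        IsLocalizedModule.mk'_cancel_left]
      rfl
end

section
/- Let f : M → M' be an R-module homomorphism and P' an S-primary submodule of M' with (f⁻¹(P') : M) ∩ S = ∅. Then f⁻¹(P') is an S-primary submodule of M. -/
theorem stmt9 {R M M' : Type*} [CommRing R] [AddCommGroup M] [Module R M]
    [AddCommGroup M'] [Module R M'] (f : M →ₗ[R] M')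
    (S : Set R) (hS0 : (0 : R) ∉ S) (hS1 : (1 : R) ∈ S)
    (hSmul : ∀ a ∈ S, ∀ b ∈ S, a * b ∈ S)
    (P' : Submodule R M') (hP' : IsSPrimary S P')
    (hdisj : ∀ s ∈ S, s ∉ (P'.comap f).colon ⊤) :
    IsSPrimary S (P'.comap f) := by
  refine ⟨hdisj, ?_⟩
  obtain ⟨s, hsS, hs⟩ := hP'.2
  refine ⟨s, hsS, fun r m hrm => ?_⟩
  have : r • f m ∈ P' := by
    have := (Submodule.mem_comap).mp hrm
    rwa [map_smul] at this
  rcases hs r (f m) this with h | h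
  · left
    refine Ideal.radical_mono (fun x hx => ?_) h
    rw [Submodule.mem_colon] at hx ⊢
    intro p _
    rw [Submodule.mem_comap, map_smul]
    exact hx (f p) trivial
  · right
    rw [Submodule.mem_comap, map_smul]
    exact h
end

section
/- Let f : M → M' be a surjective R-module homomorphism and P an S-primary submodule of M with ker(f) ⊆ P. Then f(P) is an S-primary submodule of M'. -/
theorem stmt10 {R M M' : Type*} [CommRing R] [AddCommGroup M] [Module R M]
    [AddCommGroup M'] [Module R M'] (f : M →ₗ[R] M') (hf : Function.Surjective f)
    (S : Set R) (hS0 : (0 : R) ∉ S) (hS1 : (1 : R) ∈ S)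
    (hSmul : ∀ a ∈ S, ∀ b ∈ S, a * b ∈ S)
    (P : Submodule R M) (hP : IsSPrimary S P) (hker : LinearMap.ker f ≤ P) :
    IsSPrimary S (P.map f) := by
  obtain ⟨h1, s, hsS, hs⟩ := hP
  have key : ∀ (r : R) (m : M), r • m ∈ P ↔ r • f m ∈ P.map f := by
    intro r m
    constructor
    · intro h
      exact ⟨r • m, h, by simp⟩
    · rintro ⟨p, hp, hfp⟩
      have : r • m - p ∈ LinearMap.ker f := by
        simp [LinearMap.mem_ker, map_sub, hfp]
      have := hker this
      have : (r • m - p) + p ∈ P := P.add_mem this hp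
      simpa using this
  have hcolon : (P.map f).colon ⊤ = P.colon ⊤ := by
    ext r
    simp only [Submodule.mem_colon, Submodule.mem_top, forall_true_left]
    constructor
    · intro h m
      exact fun _ => (key r m).mpr (h (f m) (Submodule.mem_top (R := R)))
    · intro h m'
      obtain ⟨m, rfl⟩ := hf m'
      exact fun _ => (key r m).mp (h m (Submodule.mem_top (R := R)))
  constructor
  · intro t htS
    rw [hcolon]
    exact h1 t htS
  · refine ⟨s, hsS, ?_⟩
    intro r m' hm'
    obtain ⟨m, rfl⟩ := hf m'
    rcases hs r m ((key r m).mpr hm') with h | h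
    · left; rwa [hcolon]
    · right; exact (key s m).mp h
end

section
/- Let L ⊆ P be submodules of an R-module M and S a multiplicatively closed subset of R. Then P is an S-primary submodule of M if and only if P/L is an S-primary submodule of M/L. -/
lemma mkQ_mem_map_iff {R M : Type*} [CommRing R] [AddCommGroup M] [Module R M]
    (L P : Submodule R M) (hLP : L ≤ P) (m : M) :
    L.mkQ m ∈ P.map L.mkQ ↔ m ∈ P := by
  constructor
  · intro h
    have : m ∈ Submodule.comap L.mkQ (P.map L.mkQ) := h
    rw [Submodule.comap_map_mkQ, sup_of_le_right hLP] at this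
    exact this
  · intro h
    exact Submodule.mem_map_of_mem h

lemma colon_map_mkQ {R M : Type*} [CommRing R] [AddCommGroup M] [Module R M]
    (L P : Submodule R M) (hLP : L ≤ P) :
    (P.map L.mkQ).colon ⊤ = P.colon ⊤ := by
  ext r
  simp only [Submodule.mem_colon]
  constructor
  · intro h m _
    have := h (L.mkQ m) trivial
    rw [← map_smul, mkQ_mem_map_iff L P hLP] at this
    exact this
  · intro h x _
    obtain ⟨m, rfl⟩ := L.mkQ_surjective x
    rw [← map_smul, mkQ_mem_map_iff L P hLP]
    exact h m trivial

theorem stmt11 {R M : Type*} [CommRing R] [AddCommGroup M] [Module R M]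
    (S : Set R) (hS0 : (0 : R) ∉ S) (hS1 : (1 : R) ∈ S)
    (hSmul : ∀ a ∈ S, ∀ b ∈ S, a * b ∈ S)
    (L P : Submodule R M) (hLP : L ≤ P) :
    IsSPrimary S P ↔ IsSPrimary S (P.map L.mkQ) := by
  rw [IsSPrimary, IsSPrimary, colon_map_mkQ L P hLP]
  constructor
  · rintro ⟨h1, s, hs, h2⟩
    refine ⟨h1, s, hs, ?_⟩
    intro r x hx
    obtain ⟨m, rfl⟩ := L.mkQ_surjective x
    rw [← map_smul, mkQ_mem_map_iff L P hLP] at hx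
    rcases h2 r m hx with h | h
    · exact Or.inl h
    · exact Or.inr (by rw [← map_smul, mkQ_mem_map_iff L P hLP]; exact h)
  · rintro ⟨h1, s, hs, h2⟩
    refine ⟨h1, s, hs, ?_⟩
    intro r m hm
    have := h2 r (L.mkQ m) (by rw [← map_smul, mkQ_mem_map_iff L P hLP]; exact hm)
    rcases this with h | h
    · exact Or.inl h
    · exact Or.inr (by rwa [← map_smul, mkQ_mem_map_iff L P hLP] at h)
end

section
/- Let P be an S-primary submodule of an R-module M. Then the ideal (P : M) is an S-primary ideal of R. -/
/-- `I` is an `S`-primary ideal of `A`. -/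
def IsSPrimaryIdeal {A : Type*} [CommRing A] (S : Set A) (I : Ideal A) : Prop :=
  (∀ s ∈ S, s ∉ I) ∧
  ∃ s ∈ S, ∀ x y : A, x * y ∈ I → s * x ∈ I.radical ∨ s * y ∈ I

theorem stmt12 {R M : Type*} [CommRing R] [AddCommGroup M] [Module R M]
    (S : Set R) (hS0 : (0 : R) ∉ S) (hS1 : (1 : R) ∈ S)
    (hSmul : ∀ a ∈ S, ∀ b ∈ S, a * b ∈ S)
    (P : Submodule R M) (hP : IsSPrimary S P) :
    IsSPrimaryIdeal S (P.colon ⊤) := by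
  obtain ⟨h1, s, hs, h⟩ := hP
  refine ⟨h1, s, hs, fun x y hxy => ?_⟩
  by_cases hx : s * x ∈ (P.colon ⊤).radical
  · exact Or.inl hx
  · refine Or.inr (Submodule.mem_colon.mpr fun m _ => ?_)
    have hm : x • (y • m) ∈ P := by
      rw [smul_smul]
      exact Submodule.mem_colon.mp hxy m trivial
    rcases h x (y • m) hm with h' | h'
    · exact absurd h' hx
    · rwa [smul_smul] at h'
end

section
/- Let M be a multiplication R-module and P a submodule of M such that (P : M) is an S-primary ideal of R. Then P is an S-primary submodule of M. -/
theorem stmt13 {R M : Type*} [CommRing R] [AddCommGroup M] [Module R M]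
    (S : Set R) (hS0 : (0 : R) ∉ S) (hS1 : (1 : R) ∈ S)
    (hSmul : ∀ a ∈ S, ∀ b ∈ S, a * b ∈ S)
    (hmult : ∀ N : Submodule R M, ∃ I : Ideal R, N = I • (⊤ : Submodule R M))
    (P : Submodule R M) (hP : IsSPrimaryIdeal S (P.colon ⊤)) :
    IsSPrimary S P := by
  obtain ⟨h1, s, hsS, hs⟩ := hP
  refine ⟨h1, s, hsS, ?_⟩
  intro r m hrm
  by_cases h : s * r ∈ (P.colon ⊤).radical
  · exact Or.inl h
  right
  obtain ⟨J, hJ⟩ := hmult (Submodule.span R {m})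
  have key : ∀ a ∈ J, s * a ∈ P.colon ⊤ := by
    intro a ha
    have hra : r * a ∈ P.colon ⊤ := by
      rw [Submodule.mem_colon]
      intro x _
      have hax : a • x ∈ Submodule.span R {m} := by
        rw [hJ]
        exact Submodule.smul_mem_smul ha trivial
      obtain ⟨c, hc⟩ := Submodule.mem_span_singleton.mp hax
      have : (r * a) • x = c • (r • m) := by
        rw [mul_smul, ← hc, smul_comm]
      rw [this]
      exact P.smul_mem c hrm
    rcases hs r a hra with hc | hc
    · exact absurd hc h
    · exact hc
  have hmJ : m ∈ J • (⊤ : Submodule R M) := by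
    rw [← hJ]; exact Submodule.mem_span_singleton_self m
  refine Submodule.smul_induction_on hmJ ?_ ?_
  · intro a ha n _
    rw [← mul_smul]
    exact Submodule.mem_colon.mp (key a ha) n trivial
  · intro x y hx hy
    rw [smul_add]
    exact P.add_mem hx hy
end

section
/- Let p be an S-primary ideal of R and M a faithful multiplication R-module. Then there exists a fixed s ∈ S such that for all a ∈ R and m ∈ M with a • m ∈ p • M, either s * a ∈ √p or s • m ∈ p • M. -/
/-- In a multiplication module, the cyclic submodule generated by `x` equals its
colon ideal smul top. -/
lemma span_eq_colon_smul {R M : Type*} [CommRing R] [AddCommGroup M] [Module R M]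
    (hmult : ∀ N : Submodule R M, ∃ I : Ideal R, N = I • (⊤ : Submodule R M))
    (x : M) :
    Submodule.span R {x} =
      ((Submodule.span R {x}).colon ⊤) • (⊤ : Submodule R M) := by
  obtain ⟨I, hI⟩ := hmult (Submodule.span R {x})
  apply le_antisymm
  · conv_lhs => rw [hI]
    apply Submodule.smul_mono_left
    intro i hi
    rw [Submodule.mem_colon]
    intro y _
    rw [hI]
    exact Submodule.smul_mem_smul hi Submodule.mem_top
  · rw [Submodule.smul_le]
    intro r hr y hy
    exact Submodule.mem_colon.1 hr y hy

/-- Dichotomy for multiplication modules (El-Bast–Smith style): at every maximal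
ideal `q`, either some `t ∉ q` sends all of `M` into a cyclic submodule, or every
element of `M` is killed by some `t ∉ q`. -/
lemma dichotomy {R M : Type*} [CommRing R] [AddCommGroup M] [Module R M]
    (hmult : ∀ N : Submodule R M, ∃ I : Ideal R, N = I • (⊤ : Submodule R M))
    (q : Ideal R) (hq : q.IsMaximal) :
    (∃ (m₀ : M) (t : R), t ∉ q ∧ ∀ x : M, ∃ r : R, t • x = r • m₀) ∨
      (∀ x : M, ∃ t ∉ q, t • x = 0) := by
  by_cases hα : ∃ (m₀ : M) (t : R), t ∉ q ∧ ∀ x : M, ∃ r : R, t • x = r • m₀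
  · exact Or.inl hα
  right
  have hcol : ∀ x : M, (Submodule.span R {x}).colon ⊤ ≤ q := by
    intro x
    by_contra h
    obtain ⟨t, ht, htq⟩ := SetLike.not_le_iff_exists.1 h
    refine hα ⟨x, t, htq, fun y => ?_⟩
    have := Submodule.mem_colon.1 ht y (Submodule.mem_top (R := R))
    obtain ⟨r, hr⟩ := Submodule.mem_span_singleton.1 this
    exact ⟨r, hr.symm⟩
  intro x
  -- inner claim
  have inner : ∀ a : R, a ∈ (Submodule.span R {x}).colon ⊤ →
      ∀ y : M, ∀ z ∈ ((Submodule.span R {y}).colon ⊤) • (⊤ : Submodule R M),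
      ∃ e ∈ q, a • z = e • x := by
    intro a ha y z hz
    refine Submodule.smul_induction_on hz ?_ ?_
    · intro b hb n _
      have hay : a • n ∈ Submodule.span R {x} :=
        Submodule.mem_colon.1 ha n (Submodule.mem_top (R := R))
      obtain ⟨r, hr⟩ := Submodule.mem_span_singleton.1 hay
      refine ⟨b * r, Ideal.mul_mem_right r q (hcol y hb), ?_⟩
      rw [smul_comm a b n, ← hr, smul_smul]
    · rintro z₁ z₂ ⟨e₁, he₁, h₁⟩ ⟨e₂, he₂, h₂⟩
      exact ⟨e₁ + e₂, add_mem he₁ he₂, by rw [smul_add, h₁, h₂, add_smul]⟩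
  have key : ∀ z ∈ ((Submodule.span R {x}).colon ⊤) • (⊤ : Submodule R M),
      ∃ e ∈ q, z = e • x := by
    intro z hz
    refine Submodule.smul_induction_on hz ?_ ?_
    · intro a ha n _
      have hn : n ∈ ((Submodule.span R {n}).colon ⊤) • (⊤ : Submodule R M) := by
        rw [← span_eq_colon_smul hmult n]
        exact Submodule.mem_span_singleton_self n
      exact inner a ha n n hn
    · rintro z₁ z₂ ⟨e₁, he₁, h₁⟩ ⟨e₂, he₂, h₂⟩
      exact ⟨e₁ + e₂, add_mem he₁ he₂, by rw [h₁, h₂, add_smul]⟩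
  have hx : x ∈ ((Submodule.span R {x}).colon ⊤) • (⊤ : Submodule R M) := by
    rw [← span_eq_colon_smul hmult x]
    exact Submodule.mem_span_singleton_self x
  obtain ⟨e, heq, hex⟩ := key x hx
  refine ⟨1 - e, fun h => hq.ne_top ?_, ?_⟩
  · rw [Ideal.eq_top_iff_one]
    have : (1 - e) + e ∈ q := add_mem h heq
    simpa using this
  · rw [sub_smul, one_smul, ← hex, sub_self]

theorem stmt14 {R M : Type*} [CommRing R] [AddCommGroup M] [Module R M]
    (S : Set R) (hS0 : (0 : R) ∉ S) (hS1 : (1 : R) ∈ S)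
    (hSmul : ∀ a ∈ S, ∀ b ∈ S, a * b ∈ S)
    (hfaithful : ∀ r : R, (∀ m : M, r • m = 0) → r = 0)
    (hmult : ∀ N : Submodule R M, ∃ I : Ideal R, N = I • (⊤ : Submodule R M))
    (p : Ideal R) (hp : IsSPrimaryIdeal S p) :
    ∃ s ∈ S, ∀ (a : R) (m : M), a • m ∈ p • (⊤ : Submodule R M) →
      s * a ∈ p.radical ∨ s • m ∈ p • (⊤ : Submodule R M) := by
  obtain ⟨-, s, hsS, hs⟩ := hp
  refine ⟨s, hsS, ?_⟩
  intro a m ham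
  by_cases h1 : s * a ∈ p.radical
  · exact Or.inl h1
  right
  by_contra h2
  set E : Ideal R := (p • (⊤ : Submodule R M)).colon (Submodule.span R {s • m}) with hE
  have hEne : E ≠ ⊤ := by
    intro h
    apply h2
    have h1E : (1 : R) ∈ E := h ▸ Submodule.mem_top
    simpa using Submodule.mem_colon_span_singleton.1 h1E
  obtain ⟨q, hqmax, hEq⟩ := Ideal.exists_le_maximal E hEne
  rcases dichotomy hmult q hqmax with ⟨m₀, t, htq, htm⟩ | hβ
  · -- case α
    obtain ⟨r, hr⟩ := htm m
    have hc : ∃ c ∈ p, t • (a • m) = c • m₀ := by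
      refine Submodule.smul_induction_on ham ?_ ?_
      · intro c hc y _
        obtain ⟨r', hr'⟩ := htm y
        refine ⟨c * r', Ideal.mul_mem_right r' p hc, ?_⟩
        rw [smul_comm t c y, hr', smul_smul]
      · rintro z₁ z₂ ⟨c₁, hc₁, h₁⟩ ⟨c₂, hc₂, h₂⟩
        exact ⟨c₁ + c₂, add_mem hc₁ hc₂, by rw [smul_add, h₁, h₂, add_smul]⟩
    obtain ⟨c, hcp, hceq⟩ := hc
    have hm₀0 : (a * r - c) • m₀ = 0 := by
      rw [sub_smul, mul_smul, ← hr, ← hceq, smul_comm a t m, sub_self]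
    have hu0 : (a * r - c) * t = 0 := by
      apply hfaithful
      intro y
      obtain ⟨ry, hry⟩ := htm y
      rw [mul_smul, hry, smul_comm, hm₀0, smul_zero]
    have hp2 : a * (r * t) ∈ p := by
      have : a * (r * t) = c * t := by linear_combination hu0
      rw [this]
      exact Ideal.mul_mem_right t p hcp
    rcases hs a (r * t) hp2 with h | h
    · exact h1 h
    · -- show t * t ∈ E
      have htt : t * t ∈ E := by
        rw [hE]
        rw [Submodule.mem_colon_span_singleton]
        have : (t * t) • (s • m) = (s * (r * t)) • m₀ := by
          rw [mul_smul, smul_comm t s m, hr, smul_smul, smul_smul]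
          congr 1
          ring
        rw [this]
        exact Submodule.smul_mem_smul h Submodule.mem_top
      rcases hqmax.isPrime.mem_or_mem (hEq htt) with h' | h' <;> exact htq h'
  · -- case β
    obtain ⟨t, htq, ht0⟩ := hβ (s • m)
    apply htq
    apply hEq
    rw [hE, Submodule.mem_colon_span_singleton, ht0]
    exact Submodule.zero_mem _
end

section
/- Let R = R₁ × R₂, S = S₁ × S₂ with S_i multiplicatively closed in R_i, and let p = p₁ × p₂ be an ideal of R. Then p is an S-primary ideal of R if and only if either (p₁ is an S₁-primary ideal of R₁ and p₂ ∩ S₂ ≠ ∅) or (p₂ is an S₂-primary ideal of R₂ and p₁ ∩ S₁ ≠ ∅). -/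
lemma mem_radical_prod {R₁ R₂ : Type*} [CommRing R₁] [CommRing R₂]
    (p₁ : Ideal R₁) (p₂ : Ideal R₂) (a : R₁) (b : R₂) :
    (a, b) ∈ (p₁.prod p₂).radical ↔ a ∈ p₁.radical ∧ b ∈ p₂.radical := by
  constructor
  · rintro ⟨n, hn⟩
    rw [Prod.pow_mk, Ideal.mem_prod] at hn
    exact ⟨⟨n, hn.1⟩, ⟨n, hn.2⟩⟩
  · rintro ⟨⟨n, hn⟩, ⟨m, hm⟩⟩
    refine ⟨n + m, ?_⟩
    rw [Prod.pow_mk, Ideal.mem_prod]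
    exact ⟨by rw [pow_add]; exact Ideal.mul_mem_right _ _ hn, by rw [pow_add b]; exact Ideal.mul_mem_left _ (b ^ n) hm⟩

theorem stmt15 {R₁ R₂ : Type*} [CommRing R₁] [CommRing R₂]
    (S₁ : Set R₁) (S₂ : Set R₂)
    (hS₁0 : (0 : R₁) ∉ S₁) (hS₁1 : (1 : R₁) ∈ S₁) (hS₁mul : ∀ a ∈ S₁, ∀ b ∈ S₁, a * b ∈ S₁)
    (hS₂0 : (0 : R₂) ∉ S₂) (hS₂1 : (1 : R₂) ∈ S₂) (hS₂mul : ∀ a ∈ S₂, ∀ b ∈ S₂, a * b ∈ S₂)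
    (p₁ : Ideal R₁) (p₂ : Ideal R₂) :
    IsSPrimaryIdeal (S₁ ×ˢ S₂) (p₁.prod p₂) ↔
      (IsSPrimaryIdeal S₁ p₁ ∧ (↑p₂ ∩ S₂ : Set R₂).Nonempty) ∨
      (IsSPrimaryIdeal S₂ p₂ ∧ (↑p₁ ∩ S₁ : Set R₁).Nonempty) := by
  constructor
  · rintro ⟨hdisj, ⟨s₁, s₂⟩, hsS, hprim⟩
    rw [Set.mem_prod] at hsS
    obtain ⟨hs₁, hs₂⟩ := hsS
    have key := hprim (1, 0) (0, 1) (by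
      rw [Prod.mk_mul_mk, Ideal.mem_prod]; simp)
    rcases key with h | h
    · -- (s₁ * 1, s₂ * 0) ∈ radical: s₁ ∈ √p₁
      rw [Prod.mk_mul_mk, mul_one, mul_zero, mem_radical_prod] at h
      obtain ⟨⟨n, hn⟩, -⟩ := h
      -- p₁ ∩ S₁ nonempty
      have hne : (↑p₁ ∩ S₁ : Set R₁).Nonempty := by
        rcases Nat.eq_zero_or_pos n with rfl | hpos
        · exact ⟨1, by simpa using hn, hS₁1⟩
        · refine ⟨s₁ ^ n, hn, ?_⟩
          clear hn
          induction n with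
          | zero => omega
          | succ k ih =>
            rcases Nat.eq_zero_or_pos k with rfl | hk
            · simpa using hs₁
            · rw [pow_succ]; exact hS₁mul _ (ih hk) _ hs₁
      obtain ⟨t₁, ht₁p, ht₁S⟩ := hne
      refine Or.inr ⟨⟨?_, s₂, hs₂, ?_⟩, ⟨t₁, ht₁p, ht₁S⟩⟩
      · intro t htS htp
        exact hdisj (t₁, t) (Set.mk_mem_prod ht₁S htS) ((Ideal.mem_prod _ _).2 ⟨ht₁p, htp⟩)
      · intro x y hxy
        have := hprim (0, x) (0, y) (by
          rw [Prod.mk_mul_mk, Ideal.mem_prod]; exact ⟨by simp, hxy⟩)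
        rcases this with h' | h'
        · rw [Prod.mk_mul_mk, mem_radical_prod] at h'
          exact Or.inl h'.2
        · rw [Prod.mk_mul_mk, Ideal.mem_prod] at h'
          exact Or.inr h'.2
    · -- (0, s₂) ∈ prod: s₂ ∈ p₂
      rw [Prod.mk_mul_mk, Ideal.mem_prod] at h
      have hs₂p : s₂ ∈ p₂ := by simpa using h.2
      refine Or.inl ⟨⟨?_, s₁, hs₁, ?_⟩, ⟨s₂, hs₂p, hs₂⟩⟩
      · intro t htS htp
        exact hdisj (t, s₂) (Set.mk_mem_prod htS hs₂) ((Ideal.mem_prod _ _).2 ⟨htp, hs₂p⟩)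
      · intro x y hxy
        have := hprim (x, 0) (y, 0) (by
          rw [Prod.mk_mul_mk, Ideal.mem_prod]; exact ⟨hxy, by simp⟩)
        rcases this with h' | h'
        · rw [Prod.mk_mul_mk, mem_radical_prod] at h'
          exact Or.inl h'.1
        · rw [Prod.mk_mul_mk, Ideal.mem_prod] at h'
          exact Or.inr h'.1
  · rintro (⟨⟨hd₁, s₁, hs₁, hprim⟩, t₂, ht₂p, ht₂S⟩ | ⟨⟨hd₂, s₂, hs₂, hprim⟩, t₁, ht₁p, ht₁S⟩)
    · refine ⟨?_, (s₁, t₂), Set.mk_mem_prod hs₁ ht₂S, ?_⟩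
      · rintro ⟨a, b⟩ habS hab
        rw [Set.mem_prod] at habS
        exact hd₁ a habS.1 ((Ideal.mem_prod _ _).1 hab).1
      · rintro ⟨x₁, x₂⟩ ⟨y₁, y₂⟩ hxy
        rw [Prod.mk_mul_mk, Ideal.mem_prod] at hxy
        rcases hprim x₁ y₁ hxy.1 with h | h
        · exact Or.inl (by
            rw [Prod.mk_mul_mk, mem_radical_prod]
            exact ⟨h, Ideal.le_radical (p₂.mul_mem_right _ ht₂p)⟩)
        · exact Or.inr (by
            rw [Prod.mk_mul_mk, Ideal.mem_prod]
            exact ⟨h, p₂.mul_mem_right _ ht₂p⟩)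
    · refine ⟨?_, (t₁, s₂), Set.mk_mem_prod ht₁S hs₂, ?_⟩
      · rintro ⟨a, b⟩ habS hab
        rw [Set.mem_prod] at habS
        exact hd₂ b habS.2 ((Ideal.mem_prod _ _).1 hab).2
      · rintro ⟨x₁, x₂⟩ ⟨y₁, y₂⟩ hxy
        rw [Prod.mk_mul_mk, Ideal.mem_prod] at hxy
        rcases hprim x₂ y₂ hxy.2 with h | h
        · exact Or.inl (by
            rw [Prod.mk_mul_mk, mem_radical_prod]
            exact ⟨Ideal.le_radical (p₁.mul_mem_right _ ht₁p), h⟩)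
        · exact Or.inr (by
            rw [Prod.mk_mul_mk, Ideal.mem_prod]
            exact ⟨p₁.mul_mem_right _ ht₁p, h⟩)
end

section
/- Let M = M₁ × M₂ be an R₁ × R₂-module, S = S₁ × S₂ a multiplicatively closed subset, and P = P₁ × P₂ a submodule of M. Then P is an S-primary submodule of M if and only if either (P₁ is an S₁-primary submodule of M₁ and (P₂ : M₂) ∩ S₂ ≠ ∅) or (P₂ is an S₂-primary submodule of M₂ and (P₁ : M₁) ∩ S₁ ≠ ∅). -/
section Prod

variable {R₁ R₂ M₁ M₂ : Type*} [CommRing R₁] [CommRing R₂]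
  [AddCommGroup M₁] [AddCommGroup M₂] [Module R₁ M₁] [Module R₂ M₂]

/-- `M₁` as a module over `R₁ × R₂`, acting through the first projection. -/
instance instFst : Module (R₁ × R₂) M₁ := Module.compHom M₁ (RingHom.fst R₁ R₂)

/-- `M₂` as a module over `R₁ × R₂`, acting through the second projection. -/
instance instSnd : Module (R₁ × R₂) M₂ := Module.compHom M₂ (RingHom.snd R₁ R₂)

/-- A submodule `P₁` of the `R₁`-module `M₁`, viewed as an `R₁ × R₂`-submodule. -/
def liftFst (P₁ : Submodule R₁ M₁) : Submodule (R₁ × R₂) M₁ where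
  carrier := P₁
  add_mem' := fun h h' => P₁.add_mem h h'
  zero_mem' := P₁.zero_mem
  smul_mem' := fun r m hm => P₁.smul_mem r.1 hm

/-- A submodule `P₂` of the `R₂`-module `M₂`, viewed as an `R₁ × R₂`-submodule. -/
def liftSnd (P₂ : Submodule R₂ M₂) : Submodule (R₁ × R₂) M₂ where
  carrier := P₂
  add_mem' := fun h h' => P₂.add_mem h h'
  zero_mem' := P₂.zero_mem
  smul_mem' := fun r m hm => P₂.smul_mem r.2 hm

lemma aux_smul_fst (r : R₁ × R₂) (m : M₁) : r • m = r.1 • m := rfl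
lemma aux_smul_snd (r : R₁ × R₂) (m : M₂) : r • m = r.2 • m := rfl

lemma aux_mem_prod {P₁ : Submodule R₁ M₁} {P₂ : Submodule R₂ M₂} {x : M₁ × M₂} :
    x ∈ (liftFst P₁).prod (liftSnd P₂) ↔ x.1 ∈ P₁ ∧ x.2 ∈ P₂ := Iff.rfl

lemma aux_mem_liftFst {P₁ : Submodule R₁ M₁} {m : M₁} :
    m ∈ liftFst (R₂ := R₂) P₁ ↔ m ∈ P₁ := Iff.rfl

lemma aux_mem_liftSnd {P₂ : Submodule R₂ M₂} {m : M₂} :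
    m ∈ liftSnd (R₁ := R₁) P₂ ↔ m ∈ P₂ := Iff.rfl

lemma aux_mem_colon {P₁ : Submodule R₁ M₁} {P₂ : Submodule R₂ M₂} {r : R₁ × R₂} :
    r ∈ ((liftFst P₁).prod (liftSnd P₂)).colon ⊤ ↔
      r.1 ∈ P₁.colon ⊤ ∧ r.2 ∈ P₂.colon ⊤ := by
  rw [Submodule.mem_colon, Submodule.mem_colon, Submodule.mem_colon]
  constructor
  · intro h
    refine ⟨fun m _ => ?_, fun m _ => ?_⟩
    · exact (h (m, 0) trivial).1
    · exact (h (0, m) trivial).2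
  · rintro ⟨h1, h2⟩ m _
    exact ⟨h1 m.1 trivial, h2 m.2 trivial⟩

lemma aux_mem_radical {P₁ : Submodule R₁ M₁} {P₂ : Submodule R₂ M₂} {r : R₁ × R₂} :
    r ∈ (((liftFst P₁).prod (liftSnd P₂)).colon ⊤).radical ↔
      r.1 ∈ (P₁.colon ⊤).radical ∧ r.2 ∈ (P₂.colon ⊤).radical := by
  simp only [Ideal.mem_radical_iff]
  constructor
  · rintro ⟨n, hn⟩
    rw [aux_mem_colon] at hn
    exact ⟨⟨n, by simpa [Prod.pow_fst] using hn.1⟩, ⟨n, by simpa [Prod.pow_snd] using hn.2⟩⟩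
  · rintro ⟨⟨n, hn⟩, ⟨k, hk⟩⟩
    refine ⟨n + k, aux_mem_colon.2 ⟨?_, ?_⟩⟩
    · rw [Prod.pow_fst, pow_add]
      exact Ideal.mul_mem_right _ _ hn
    · rw [Prod.pow_snd, pow_add, mul_comm]
      exact Ideal.mul_mem_right _ _ hk

theorem stmt16 (S₁ : Set R₁) (S₂ : Set R₂)
    (hS₁0 : (0 : R₁) ∉ S₁) (hS₁1 : (1 : R₁) ∈ S₁) (hS₁mul : ∀ a ∈ S₁, ∀ b ∈ S₁, a * b ∈ S₁)
    (hS₂0 : (0 : R₂) ∉ S₂) (hS₂1 : (1 : R₂) ∈ S₂) (hS₂mul : ∀ a ∈ S₂, ∀ b ∈ S₂, a * b ∈ S₂)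
    (P₁ : Submodule R₁ M₁) (P₂ : Submodule R₂ M₂) :
    IsSPrimary (S₁ ×ˢ S₂) ((liftFst P₁).prod (liftSnd P₂)) ↔
      (IsSPrimary S₁ P₁ ∧ (↑(P₂.colon ⊤) ∩ S₂ : Set R₂).Nonempty) ∨
      (IsSPrimary S₂ P₂ ∧ (↑(P₁.colon ⊤) ∩ S₁ : Set R₁).Nonempty) := by
  constructor
  · rintro ⟨hdisj, s, hsS, hs⟩
    obtain ⟨hs1, hs2⟩ := Set.mem_prod.1 hsS
    -- First, show that either s.2 ∈ rad (P₂.colon ⊤) or s.1 ∈ P₁.colon ⊤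
    have key : (∃ n, s.2 ^ n ∈ P₂.colon ⊤) ∨ s.1 ∈ P₁.colon ⊤ := by
      by_cases h : ∃ n, s.2 ^ n ∈ P₂.colon ⊤
      · exact Or.inl h
      · right
        rw [Submodule.mem_colon]
        intro m _
        have := hs (0, 1) (m, 0) (by simp [aux_mem_prod, aux_mem_liftFst, aux_mem_liftSnd, aux_smul_fst, aux_smul_snd])
        rcases this with h1 | h2
        · exfalso
          rw [aux_mem_radical] at h1
          obtain ⟨n, hn⟩ := h1.2
          exact h ⟨n, by simpa using hn⟩
        · exact h2.1
    rcases key with ⟨n, hn⟩ | hn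
    · -- Case A: P₂.colon ⊤ meets S₂; show P₁ is S₁-primary
      have hpowS : ∀ k : ℕ, s.2 ^ k ∈ S₂ := by
        intro k
        induction k with
        | zero => simpa using hS₂1
        | succ j ih => rw [pow_succ]; exact hS₂mul _ ih _ hs2
      have ht2 : s.2 ^ n ∈ (↑(P₂.colon ⊤) ∩ S₂ : Set R₂) := ⟨hn, hpowS n⟩
      left
      refine ⟨⟨?_, s.1, hs1, ?_⟩, ⟨s.2 ^ n, ht2⟩⟩
      · intro u huS huC
        exact hdisj (u, s.2 ^ n) (Set.mem_prod.2 ⟨huS, ht2.2⟩) (aux_mem_colon.2 ⟨huC, hn⟩)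
      · intro r m hrm
        have := hs (r, 1) (m, 0) (by simp [aux_mem_prod, aux_mem_liftFst, aux_mem_liftSnd, aux_smul_fst, aux_smul_snd, hrm])
        rcases this with h1 | h2
        · exact Or.inl (aux_mem_radical.1 h1).1
        · exact Or.inr h2.1
    · -- Case B: s.1 ∈ P₁.colon ⊤; show P₂ is S₂-primary
      right
      refine ⟨⟨?_, s.2, hs2, ?_⟩, ⟨s.1, hn, hs1⟩⟩
      · intro u huS huC
        exact hdisj (s.1, u) (Set.mem_prod.2 ⟨hs1, huS⟩) (aux_mem_colon.2 ⟨hn, huC⟩)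
      · intro r m hrm
        have := hs (1, r) (0, m) (by simp [aux_mem_prod, aux_mem_liftFst, aux_mem_liftSnd, aux_smul_fst, aux_smul_snd, hrm])
        rcases this with h1 | h2
        · exact Or.inl (aux_mem_radical.1 h1).2
        · exact Or.inr h2.2
  · rintro (⟨⟨hP₁disj, s₁, hs₁S, hs₁⟩, t₂, ht₂C, ht₂S⟩ | ⟨⟨hP₂disj, s₂, hs₂S, hs₂⟩, t₁, ht₁C, ht₁S⟩)
    · refine ⟨?_, (s₁, t₂), Set.mem_prod.2 ⟨hs₁S, ht₂S⟩, ?_⟩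
      · intro u huS huC
        exact hP₁disj u.1 (Set.mem_prod.1 huS).1 (aux_mem_colon.1 huC).1
      · rintro r m hrm
        have hrm1 : r.1 • m.1 ∈ P₁ := hrm.1
        rcases hs₁ r.1 m.1 hrm1 with h1 | h2
        · exact Or.inl (aux_mem_radical.2 ⟨h1, Ideal.le_radical (Ideal.mul_mem_right _ _ ht₂C)⟩)
        · exact Or.inr (aux_mem_prod.2 ⟨h2, Submodule.mem_colon.1 ht₂C m.2 trivial⟩)
    · refine ⟨?_, (t₁, s₂), Set.mem_prod.2 ⟨ht₁S, hs₂S⟩, ?_⟩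
      · intro u huS huC
        exact hP₂disj u.2 (Set.mem_prod.1 huS).2 (aux_mem_colon.1 huC).2
      · rintro r m hrm
        have hrm2 : r.2 • m.2 ∈ P₂ := hrm.2
        rcases hs₂ r.2 m.2 hrm2 with h1 | h2
        · exact Or.inl (aux_mem_radical.2 ⟨Ideal.le_radical (Ideal.mul_mem_right _ _ ht₁C), h1⟩)
        · exact Or.inr (aux_mem_prod.2 ⟨Submodule.mem_colon.1 ht₁C m.1 trivial, h2⟩)
  
end Prod
end

section
/- Let P be an S-primary submodule of an R-module M. Then there exists s ∈ S such that for all s' ∈ S, (P :_M s') ⊆ (P :_M s), where (P :_M t) = {m ∈ M | t • m ∈ P}. -/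
theorem stmt17 {R M : Type*} [CommRing R] [AddCommGroup M] [Module R M]
    (S : Set R) (hS0 : (0 : R) ∉ S) (hS1 : (1 : R) ∈ S)
    (hSmul : ∀ a ∈ S, ∀ b ∈ S, a * b ∈ S)
    (P : Submodule R M) (hP : IsSPrimary S P) :
    ∃ s ∈ S, ∀ s' ∈ S, ∀ m : M, s' • m ∈ P → s • m ∈ P := by
  obtain ⟨hdisj, s, hs, hprim⟩ := hP
  refine ⟨s, hs, fun s' hs' m hm => ?_⟩
  rcases hprim s' m hm with h | h
  · exfalso
    obtain ⟨n, hn⟩ := h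
    have hxS : s * s' ∈ S := hSmul s hs s' hs'
    have hpow : ∀ k : ℕ, (s * s') ^ (k + 1) ∈ S := by
      intro k
      induction k with
      | zero => simpa using hxS
      | succ k ih => rw [pow_succ]; exact hSmul _ ih _ hxS
    exact hdisj _ (hpow n) (by rw [pow_succ]; exact Ideal.mul_mem_right _ _ hn)
  · exact h
end

section
/- Let P be a submodule of an R-module M with (P : M) ∩ S = ∅. Then P is an S-primary submodule of M if and only if (P :_M s) = {m ∈ M | s • m ∈ P} is a primary submodule of M for some s ∈ S. -/
theorem stmt18 {R M : Type*} [CommRing R] [AddCommGroup M] [Module R M]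
    (S : Set R) (hS0 : (0 : R) ∉ S) (hS1 : (1 : R) ∈ S)
    (hSmul : ∀ a ∈ S, ∀ b ∈ S, a * b ∈ S)
    (P : Submodule R M) (hdisj : ∀ s ∈ S, s ∉ P.colon ⊤) :
    IsSPrimary S P ↔
      ∃ s ∈ S, IsPrimarySub (P.comap (LinearMap.lsmul R M s)) := by
  constructor
  · rintro ⟨-, s, hsS, hs⟩
    have spow : ∀ n : ℕ, s ^ n ∈ S := by
      intro n
      induction n with
      | zero => simpa using hS1
      | succ n ih => rw [pow_succ]; exact hSmul _ ih _ hsS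
    have hrad : ∀ n : ℕ, s ^ n ∉ (P.colon ⊤).radical := by
      rintro n ⟨k, hk⟩
      exact hdisj _ (spow (n * k)) (by rwa [← pow_mul] at hk)
    have key : ∀ (k : ℕ) (x : M), s ^ k • x ∈ P → s • x ∈ P := by
      intro k x hx
      rcases hs (s ^ k) x hx with h | h
      · exact absurd (by rwa [← pow_succ'] at h) (hrad (k + 1))
      · exact h
    refine ⟨s, hsS, ?_, ?_⟩
    · intro htop
      refine hdisj s hsS (Submodule.mem_colon.2 fun m _ => ?_)
      have : m ∈ P.comap (LinearMap.lsmul R M s) := htop ▸ Submodule.mem_top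
      simpa using this
    · intro r n hrn
      have hrn' : r • s • n ∈ P := by
        rw [smul_comm]; exact hrn
      rcases hs r (s • n) hrn' with h | h
      · right
        obtain ⟨k, hk⟩ := h
        refine ⟨k, Submodule.mem_colon.2 fun m _ => ?_⟩
        have h1 : (s * r) ^ k • m ∈ P := Submodule.mem_colon.1 hk m trivial
        rw [mul_pow, mul_smul] at h1
        show r ^ k • m ∈ P.comap (LinearMap.lsmul R M s)
        show s • r ^ k • m ∈ P
        exact key k _ h1
      · left
        have : s ^ 2 • n ∈ P := by rw [pow_two, mul_smul]; exact h
        simpa using key 2 n this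
  · rintro ⟨s, hsS, hQne, hQ⟩
    refine ⟨hdisj, s, hsS, fun r m hrm => ?_⟩
    have hrmQ : r • m ∈ P.comap (LinearMap.lsmul R M s) :=
      Submodule.smul_mem P s hrm
    rcases hQ r m hrmQ with h | h
    · right; exact h
    · left
      obtain ⟨k, hk⟩ := h
      rcases Nat.eq_zero_or_pos k with rfl | hkpos
      · exfalso
        apply hQne
        rw [Submodule.eq_top_iff']
        intro x
        have := Submodule.mem_colon.1 hk x trivial
        simpa using this
      · obtain ⟨j, rfl⟩ := Nat.exists_eq_succ_of_ne_zero hkpos.ne'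
        refine ⟨j + 1, Submodule.mem_colon.2 fun x _ => ?_⟩
        have h1 : r ^ (j + 1) • x ∈ P.comap (LinearMap.lsmul R M s) :=
          Submodule.mem_colon.1 hk x trivial
        have h2 : s • r ^ (j + 1) • x ∈ P := h1
        have : (s * r) ^ (j + 1) • x = s ^ j • s • r ^ (j + 1) • x := by
          rw [mul_pow, pow_succ, mul_smul, mul_smul]
        rw [this]
        exact Submodule.smul_mem P _ h2
end

section
/- Let M be a module over an integral domain R. Then M is torsion-free if and only if for every maximal ideal 𝔪 of R, M is quasi (R \ 𝔪)-torsion-free, i.e., there exists s ∉ 𝔪 such that for all r ∈ R and m ∈ M with r • m = 0, either s • m = 0 or (s * r)^t = 0 for some t ∈ ℕ. -/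
theorem stmt19 {R M : Type*} [CommRing R] [IsDomain R] [AddCommGroup M] [Module R M] :
    (∀ (r : R) (m : M), r • m = 0 → r = 0 ∨ m = 0) ↔
      ∀ 𝔪 : Ideal R, 𝔪.IsMaximal →
        ∃ s ∉ 𝔪, ∀ (r : R) (m : M), r • m = 0 → s • m = 0 ∨ ∃ t : ℕ, (s * r) ^ t = 0 := by
  constructor
  · intro h 𝔪 h𝔪
    refine ⟨1, h𝔪.ne_top ∘ (Ideal.eq_top_iff_one 𝔪).2, fun r m hrm => ?_⟩
    rcases h r m hrm with hr | hm
    · exact Or.inr ⟨1, by simp [hr]⟩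
    · exact Or.inl (by simp [hm])
  · intro h r m hrm
    by_cases hr : r = 0
    · exact Or.inl hr
    right
    -- annihilator of m is ⊤
    have hann : ∀ 𝔪 : Ideal R, 𝔪.IsMaximal → ∃ s ∉ 𝔪, s • m = 0 := by
      intro 𝔪 h𝔪
      obtain ⟨s, hs, hsp⟩ := h 𝔪 h𝔪
      refine ⟨s, hs, ?_⟩
      rcases hsp r m hrm with h1 | ⟨t, ht⟩
      · exact h1
      · exfalso
        have hs0 : s ≠ 0 := fun h0 => hs (h0 ▸ 𝔪.zero_mem)
        have : s * r ≠ 0 := mul_ne_zero hs0 hr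
        exact this (pow_eq_zero_iff'.mp ht).1
    -- use the ideal of annihilators
    set I : Ideal R := Submodule.comap (LinearMap.toSpanSingleton R M m) ⊥ with hI
    have hIt : I = ⊤ := by
      by_contra hne
      obtain ⟨𝔪, h𝔪, hle⟩ := Ideal.exists_le_maximal I hne
      obtain ⟨s, hs, hsm⟩ := hann 𝔪 h𝔪
      exact hs (hle (by simpa [hI, LinearMap.toSpanSingleton] using hsm))
    have : (1 : R) ∈ I := hIt ▸ Submodule.mem_top
    simpa [hI, LinearMap.toSpanSingleton] using this
end
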